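/- A half-synchronized subshift whose Fischer graph is finite is sofic. -/

import Mathlib

namespace Paper

variable {A B C : Type*}

def shiftMap (x : ℤ → A) : ℤ → A := fun i => x (i + 1)

def shiftInvMap (x : ℤ → A) : ℤ → A := fun i => x (i - 1)

/-- A subshift: nonempty, shift-invariant (both directions), and closed
(expressed combinatorially: any configuration all of whose central patterns
are approximated by members is a member). -/
def IsSubshift (X : Set (ℤ → A)) : Prop :=
  X.Nonempty ∧ (∀ x ∈ X, shiftMap x ∈ X) ∧ (∀ x ∈ X, shiftInvMap x ∈ X) ∧
  ∀ x : ℤ → A, (∀ n : ℕ, ∃ y ∈ X, ∀ i : ℤ, |i| ≤ (n : ℤ) → y i = x i) → x ∈ X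

/-- The word `x[i, i+k-1]`. -/
def cfgWord (x : ℤ → A) (i : ℤ) (k : ℕ) : List A :=
  List.ofFn (fun t : Fin k => x (i + ((t : ℕ) : ℤ)))

/-- The language of a set of configurations. -/
def lang (X : Set (ℤ → A)) : Set (List A) := {w | ∃ x ∈ X, ∃ i : ℤ, cfgWord x i w.length = w}

def TransitiveShift (X : Set (ℤ → A)) : Prop :=
  ∀ u ∈ lang X, ∀ v ∈ lang X, ∃ w : List A, u ++ w ++ v ∈ lang X

/-- Left ray of a configuration: `leftRay x n = x (-1-n)`. -/
def leftRay (x : ℤ → A) : ℕ → A := fun n => x (-1 - (n : ℤ))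

def rightRay (x : ℤ → A) : ℕ → A := fun n => x (n : ℤ)

def LeftRays (X : Set (ℤ → A)) : Set (ℕ → A) := leftRay '' X

def RightRays (X : Set (ℤ → A)) : Set (ℕ → A) := rightRay '' X

/-- Glue a left ray and a right ray into a configuration. -/
def glue (l r : ℕ → A) : ℤ → A := fun i => if 0 ≤ i then r i.toNat else l (-1 - i).toNat

/-- Follower set of a left-infinite sequence. -/
def foll (X : Set (ℤ → A)) (l : ℕ → A) : Set (ℕ → A) := {r | glue l r ∈ X}

def wordThen (w : List A) (r : ℕ → A) : ℕ → A :=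
  fun n => if h : n < w.length then w.get ⟨n, h⟩ else r (n - w.length)

/-- Follower set of a word. -/
def follW (X : Set (ℤ → A)) (w : List A) : Set (ℕ → A) := {r | wordThen w r ∈ RightRays X}

def occursInLeft (l : ℕ → A) (w : List A) : Prop :=
  ∃ j : ℕ, ∀ k : Fin w.length, l (j + (w.length - 1 - (k : ℕ))) = w.get k

/-- The language of a left-infinite sequence. -/
def langL (l : ℕ → A) : Set (List A) := {w | occursInLeft l w}

/-- The left ray `l` ends with the word `w`. -/
def raySuffix (l : ℕ → A) (w : List A) : Prop :=
  ∀ k : Fin w.length, l (w.length - 1 - (k : ℕ)) = w.get k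

def HalfSyncWord (X : Set (ℤ → A)) (w : List A) : Prop :=
  w ∈ lang X ∧ ∃ l ∈ LeftRays X, raySuffix l w ∧ langL l = lang X ∧ foll X l = follW X w

def HalfSynchronized (X : Set (ℤ → A)) : Prop := TransitiveShift X ∧ ∃ w, HalfSyncWord X w

def SyncWord (X : Set (ℤ → A)) (w : List A) : Prop :=
  w ∈ lang X ∧ ∀ l ∈ LeftRays X, raySuffix l w → foll X l = follW X w

def Synchronized (X : Set (ℤ → A)) : Prop := TransitiveShift X ∧ ∃ w, SyncWord X w

/-- Product of two subshifts, over the product alphabet. -/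
def prodShift (Y : Set (ℤ → B)) (Z : Set (ℤ → C)) : Set (ℤ → B × C) :=
  {x | (fun i => (x i).1) ∈ Y ∧ (fun i => (x i).2) ∈ Z}

/-- Identification of a pair of sets of right rays with a set of right rays
over the product alphabet. -/
def prodRaySet (S : Set (ℕ → B)) (T : Set (ℕ → C)) : Set (ℕ → B × C) :=
  {r | (fun n => (r n).1) ∈ S ∧ (fun n => (r n).2) ∈ T}

/-- Extend a left ray by one more symbol on the right. -/
def extendRay (l : ℕ → A) (a : A) : ℕ → A := fun n => if n = 0 then a else l (n - 1)

/-- Edge of the Krieger graph from `u` to `v` labeled `a`. -/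
def KEdge (X : Set (ℤ → A)) (u : Set (ℕ → A)) (a : A) (v : Set (ℕ → A)) : Prop :=
  ∃ l ∈ LeftRays X, extendRay l a ∈ LeftRays X ∧ u = foll X l ∧ v = foll X (extendRay l a)

def KStep (X : Set (ℤ → A)) (u v : Set (ℕ → A)) : Prop := ∃ a, KEdge X u a v

/-- Existence of a finite path in the Krieger graph. -/
def KReach (X : Set (ℤ → A)) : Set (ℕ → A) → Set (ℕ → A) → Prop :=
  Relation.ReflTransGen (KStep X)

def KVertex (X : Set (ℤ → A)) (v : Set (ℕ → A)) : Prop := ∃ l ∈ LeftRays X, v = foll X l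

/-- A subshift is sofic iff it has finitely many follower sets. -/
def Sofic (X : Set (ℤ → A)) : Prop := {v : Set (ℕ → A) | KVertex X v}.Finite

/-- Vertex of the Fischer graph (w.r.t. half-synchronizing word `w`): a vertex of the
Krieger graph in the maximal strongly connected subgraph containing `foll w`. -/
def FVertex (X : Set (ℤ → A)) (w : List A) (v : Set (ℕ → A)) : Prop :=
  KVertex X v ∧ KReach X (follW X w) v ∧ KReach X v (follW X w)

/-- Directed (multi)graph with vertex type `V` and edge type `E`. -/
structure DiGraph (V : Type*) (E : Type*) where
  ini : E → V
  ter : E → V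

variable {V E V' E' : Type*}

/-- Bi-infinite path on a graph. -/
def BiPath (G : DiGraph V E) (x : ℤ → E) : Prop := ∀ i : ℤ, G.ter (x i) = G.ini (x (i + 1))

/-- `p` is a finite path of `m+1` edges. -/
def FinPath (G : DiGraph V E) (m : ℕ) (p : Fin (m + 1) → E) : Prop :=
  ∀ k : Fin m, G.ter (p k.castSucc) = G.ini (p k.succ)

/-- The subpath `x[i, i+n]` of a bi-infinite path is a shortest path between its endpoints. -/
def GeodesicSeg (G : DiGraph V E) (x : ℤ → E) (i : ℤ) (n : ℕ) : Prop :=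
  ∀ (m : ℕ) (p : Fin (m + 1) → E), FinPath G m p →
    G.ini (p 0) = G.ini (x i) → G.ter (p (Fin.last m)) = G.ter (x (i + (n : ℤ))) → n ≤ m

def EvGeodesic (G : DiGraph V E) (x : ℤ → E) : Prop :=
  ∃ i₀ : ℤ, ∀ i : ℤ, i₀ ≤ i → ∀ n : ℕ, GeodesicSeg G x i n

/-- Strictly proximal pair of bi-infinite paths. -/
def StrictProxPair (x y : ℤ → E) : Prop :=
  (∀ n : ℕ, ∃ i : ℕ, ∀ k : ℕ, k ≤ n → x ((i : ℤ) + (k : ℤ)) = y ((i : ℤ) + (k : ℤ))) ∧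
  ∀ N : ℕ, ∃ i : ℕ, N ≤ i ∧ x ((i : ℕ) : ℤ) ≠ y ((i : ℕ) : ℤ)

def HasEvGeoProxPair (G : DiGraph V E) : Prop :=
  ∃ x y : ℤ → E, BiPath G x ∧ BiPath G y ∧ EvGeodesic G x ∧ EvGeodesic G y ∧ StrictProxPair x y

/-- Edges of the Fischer graph: Krieger edges between Fischer vertices. -/
def FischerE (X : Set (ℤ → A)) (w : List A) : Type _ :=
  {t : Set (ℕ → A) × A × Set (ℕ → A) //
    FVertex X w t.1 ∧ FVertex X w t.2.2 ∧ KEdge X t.1 t.2.1 t.2.2}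

def FischerGraph (X : Set (ℤ → A)) (w : List A) : DiGraph (Set (ℕ → A)) (FischerE X w) :=
  ⟨fun e => e.1.1, fun e => e.1.2.2⟩

def SlidingBlockCode (X : Set (ℤ → A)) (F : (ℤ → A) → (ℤ → B)) : Prop :=
  ∃ (r : ℕ) (f : (Fin (2 * r + 1) → A) → B),
    ∀ x ∈ X, ∀ i : ℤ, F x i = f (fun k => x (i + ((k : ℕ) : ℤ) - (r : ℤ)))

def ShiftConjugate (X : Set (ℤ → A)) (Y : Set (ℤ → B)) : Prop :=
  ∃ F : (ℤ → A) → (ℤ → B), SlidingBlockCode X F ∧ Set.InjOn F X ∧ F '' X = Y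

def DirectPrime (X : Set (ℤ → A)) : Prop :=
  ∀ (B C : Type) (_ : Finite B) (_ : Finite C) (Y : Set (ℤ → B)) (Z : Set (ℤ → C)),
    IsSubshift Y → IsSubshift Z → ShiftConjugate X (prodShift Y Z) →
    (∃ y, Y = {y}) ∨ (∃ z, Z = {z})

section Aux

variable {A : Type*}

def shiftPow (k : ℤ) (x : ℤ → A) : ℤ → A := fun i => x (i + k)

lemma shiftMap_shiftInvMap (z : ℤ → A) : shiftMap (shiftInvMap z) = z := by
  funext i; show z (i + 1 - 1) = z i; congr 1; ring

lemma shift_nat_mem {X : Set (ℤ → A)} (hX : IsSubshift X) :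
    ∀ (n : ℕ) {x : ℤ → A}, x ∈ X → (fun i => x (i + (n : ℤ))) ∈ X := by
  intro n
  induction n with
  | zero => intro x hx; simpa using hx
  | succ n ih =>
    intro x hx
    have h := hX.2.1 _ (ih hx)
    have he : shiftMap (fun i => x (i + (n:ℤ))) = fun i => x (i + ((n+1 : ℕ) : ℤ)) := by
      funext i; show x (i + 1 + (n:ℤ)) = _; congr 1; omega
    rwa [he] at h

lemma shift_negnat_mem {X : Set (ℤ → A)} (hX : IsSubshift X) :
    ∀ (n : ℕ) {x : ℤ → A}, x ∈ X → (fun i => x (i - (n : ℤ))) ∈ X := by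
  intro n
  induction n with
  | zero => intro x hx; simpa using hx
  | succ n ih =>
    intro x hx
    have h := hX.2.2.1 _ (ih hx)
    have he : shiftInvMap (fun i => x (i - (n:ℤ))) = fun i => x (i - ((n+1 : ℕ) : ℤ)) := by
      funext i; show x (i - 1 - (n:ℤ)) = _; congr 1; omega
    rwa [he] at h

lemma shiftPow_mem {X : Set (ℤ → A)} (hX : IsSubshift X) (k : ℤ) {x : ℤ → A} (hx : x ∈ X) :
    shiftPow k x ∈ X := by
  obtain ⟨n, rfl | rfl⟩ := k.eq_nat_or_neg
  · exact shift_nat_mem hX n hx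
  · have h := shift_negnat_mem hX n hx
    have he : (fun i => x (i - (n:ℤ))) = shiftPow (-(n:ℤ)) x := by
      funext i; simp [shiftPow, sub_eq_add_neg]
    rwa [he] at h

lemma cfgWord_length (x : ℤ → A) (i : ℤ) (k : ℕ) : (cfgWord x i k).length = k := by
  simp [cfgWord]

lemma cfgWord_eq_iff {x y : ℤ → A} {i j : ℤ} {k : ℕ} :
    cfgWord x i k = cfgWord y j k ↔ ∀ t : Fin k, x (i + (t : ℕ)) = y (j + (t : ℕ)) := by
  unfold cfgWord
  rw [List.ofFn_inj]
  constructor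
  · intro h t; exact congrFun h t
  · intro h; funext t; exact h t

lemma word_mem_lang {X : Set (ℤ → A)} {x : ℤ → A} (hx : x ∈ X) (i : ℤ) (k : ℕ) :
    cfgWord x i k ∈ lang X :=
  ⟨x, hx, i, by rw [cfgWord_length]⟩

lemma nil_mem_lang {X : Set (ℤ → A)} (hX : IsSubshift X) : ([] : List A) ∈ lang X := by
  obtain ⟨x, hx⟩ := hX.1
  have := word_mem_lang hx 0 0
  simpa [cfgWord] using this

lemma mem_of_words {X : Set (ℤ → A)} (hX : IsSubshift X) {x : ℤ → A}
    (h : ∀ n : ℕ, cfgWord x (-(n:ℤ)) (2*n+1) ∈ lang X) : x ∈ X := by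
  apply hX.2.2.2
  intro n
  obtain ⟨z, hz, i0, hword⟩ := h n
  rw [cfgWord_length] at hword
  refine ⟨shiftPow (i0 + n) z, shiftPow_mem hX _ hz, ?_⟩
  intro i hi
  rw [abs_le] at hi
  have ht : (i + n).toNat < 2*n+1 := by omega
  have h1 := cfgWord_eq_iff.mp hword ⟨(i + n).toNat, ht⟩
  have hcast : (((i + (n:ℤ)).toNat : ℤ)) = i + n := Int.toNat_of_nonneg (by omega)
  rw [hcast] at h1
  show z (i + (i0 + n)) = x i
  calc z (i + (i0 + n)) = z (i0 + (i + n)) := by congr 1; ring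
    _ = x (-(n:ℤ) + (i + n)) := h1
    _ = x i := by congr 1; ring

end Aux
section Aux2

variable {A : Type*}

lemma leftRay_glue (l r : ℕ → A) : leftRay (glue l r) = l := by
  funext n
  show glue l r (-1 - (n:ℤ)) = l n
  rw [glue, if_neg (by omega : ¬ (0:ℤ) ≤ -1 - (n:ℤ))]
  congr 1; omega

lemma glue_leftRay_rightRay (x : ℤ → A) : glue (leftRay x) (rightRay x) = x := by
  funext i
  by_cases h : 0 ≤ i
  · rw [glue, if_pos h]; show x (i.toNat : ℤ) = x i; congr 1; omega
  · rw [glue, if_neg h]; show x (-1 - (((-1 - i).toNat : ℕ) : ℤ)) = x i; congr 1; omega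

lemma mem_leftRays_iff {X : Set (ℤ → A)} {l : ℕ → A} :
    l ∈ LeftRays X ↔ ∃ r, glue l r ∈ X := by
  constructor
  · rintro ⟨x, hx, rfl⟩
    exact ⟨rightRay x, by rw [glue_leftRay_rightRay]; exact hx⟩
  · rintro ⟨r, hr⟩
    exact ⟨glue l r, hr, leftRay_glue l r⟩

/-- prepend a symbol to a right ray -/
def consR (a : A) (r : ℕ → A) : ℕ → A := fun n => if n = 0 then a else r (n - 1)

lemma shiftInv_glue_extend (l : ℕ → A) (a : A) (r : ℕ → A) :
    shiftInvMap (glue (extendRay l a) r) = glue l (consR a r) := by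
  funext i
  simp only [shiftInvMap, glue, extendRay, consR]
  by_cases h1 : 0 ≤ i - 1
  · rw [if_pos h1, if_pos (by omega : 0 ≤ i), if_neg (by omega : ¬ i.toNat = 0)]
    congr 1; omega
  · rw [if_neg h1]
    by_cases h2 : 0 ≤ i
    · rw [if_pos h2, if_pos (by omega : (-1 - (i - 1)).toNat = 0),
        if_pos (by omega : i.toNat = 0)]
    · rw [if_neg h2, if_neg (by omega : ¬ (-1 - (i - 1)).toNat = 0)]
      congr 1; omega

lemma glue_extend_mem_iff {X : Set (ℤ → A)} (hX : IsSubshift X) {l : ℕ → A} {a : A} {r : ℕ → A} :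
    glue (extendRay l a) r ∈ X ↔ glue l (consR a r) ∈ X := by
  constructor
  · intro h
    rw [← shiftInv_glue_extend]
    exact hX.2.2.1 _ h
  · intro h
    have h2 := hX.2.1 _ h
    rw [← shiftInv_glue_extend l a r, shiftMap_shiftInvMap] at h2
    exact h2

lemma foll_extendRay {X : Set (ℤ → A)} (hX : IsSubshift X) (l : ℕ → A) (a : A) :
    foll X (extendRay l a) = {r | consR a r ∈ foll X l} :=
  Set.ext fun _ => glue_extend_mem_iff hX

lemma extend_mem_leftRays_iff {X : Set (ℤ → A)} (hX : IsSubshift X) {l : ℕ → A} {a : A} :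
    extendRay l a ∈ LeftRays X ↔ ∃ r, consR a r ∈ foll X l := by
  rw [mem_leftRays_iff]
  exact exists_congr fun r => glue_extend_mem_iff hX

lemma KEdge_transfer {X : Set (ℤ → A)} (hX : IsSubshift X) {u v : Set (ℕ → A)} {a : A}
    (h : KEdge X u a v) {l : ℕ → A} (hl : l ∈ LeftRays X) (hfl : foll X l = u) :
    extendRay l a ∈ LeftRays X ∧ foll X (extendRay l a) = v := by
  obtain ⟨l2, hl2, hl2a, hu, hv⟩ := h
  have hff : foll X l = foll X l2 := by rw [hfl, hu]
  constructor
  · rw [extend_mem_leftRays_iff hX, hff]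
    rw [extend_mem_leftRays_iff hX] at hl2a
    exact hl2a
  · rw [foll_extendRay hX, hv, foll_extendRay hX, hff]

end Aux2
section Aux3

variable {A : Type*}

lemma getElem_idx_congr (s : List A) {i j : ℕ} (h : i = j) (hi : i < s.length) :
    s[i]'hi = s[j]'(h ▸ hi) := by subst h; rfl

lemma cons_getElem_pos (a : A) (s : List A) (i : ℕ) (h : i < s.length + 1) (h0 : 0 < i) :
    (a :: s)[i]'(by simpa using h) = s[i - 1]'(by omega) := by
  obtain ⟨j, rfl⟩ : ∃ j, i = j + 1 := ⟨i - 1, by omega⟩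
  simp

/-- append a finite word to a left ray -/
def rayApp (l : ℕ → A) (s : List A) : ℕ → A :=
  fun n => if h : n < s.length then s[s.length - 1 - n]'(by omega) else l (n - s.length)

lemma rayApp_lt {l : ℕ → A} {s : List A} {n : ℕ} (h : n < s.length) :
    rayApp l s n = s[s.length - 1 - n]'(by omega) := dif_pos h

lemma rayApp_ge {l : ℕ → A} {s : List A} {n : ℕ} (h : ¬ n < s.length) :
    rayApp l s n = l (n - s.length) := dif_neg h

lemma rayApp_nil (l : ℕ → A) : rayApp l [] = l := by
  funext n; rw [rayApp_ge (by simp)]; simp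

lemma rayApp_cons (l : ℕ → A) (a : A) (s : List A) :
    rayApp l (a :: s) = rayApp (extendRay l a) s := by
  funext n
  by_cases h2 : n < s.length
  · rw [rayApp_lt (show n < (a::s).length by simp; omega), rayApp_lt h2]
    have h3 : (a :: s).length - 1 - n = (s.length - 1 - n) + 1 := by simp; omega
    rw [getElem_idx_congr _ h3]
    simp
  · by_cases h4 : n = s.length
    · subst h4
      rw [rayApp_lt (show s.length < (a::s).length by simp), rayApp_ge (by omega)]
      have h5 : (a :: s).length - 1 - s.length = 0 := by simp
      rw [getElem_idx_congr _ h5]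
      simp [extendRay]
    · rw [rayApp_ge (show ¬ n < (a::s).length by simp; omega), rayApp_ge h2]
      rw [extendRay]
      rw [if_neg (by omega : ¬ n - s.length = 0)]
      congr 1; all_goals (simp only [List.length_cons]; omega)

lemma rayApp_append (l : ℕ → A) (s t : List A) :
    rayApp l (s ++ t) = rayApp (rayApp l s) t := by
  induction s generalizing l with
  | nil => rw [rayApp_nil]; rfl
  | cons a s ih =>
    rw [List.cons_append, rayApp_cons, rayApp_cons, ih]

/-- word formed by the last `m` symbols of a left ray -/
def suffixW (l : ℕ → A) (m : ℕ) : List A := List.ofFn (fun k : Fin m => l (m - 1 - (k:ℕ)))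

lemma suffixW_length (l : ℕ → A) (m : ℕ) : (suffixW l m).length = m := by simp [suffixW]

lemma suffixW_getElem (l : ℕ → A) (m k : ℕ) (h : k < m) :
    (suffixW l m)[k]'(by simp [suffixW]; omega) = l (m - 1 - k) := by
  simp [suffixW]

lemma suffixW_succ (l : ℕ → A) (m : ℕ) : suffixW l (m+1) = l m :: suffixW l m := by
  apply List.ext_getElem (by simp [suffixW_length])
  intro k h1 h2
  by_cases hk : k = 0
  · subst hk
    rw [suffixW_getElem _ _ _ (by omega : (0:ℕ) < m + 1)]
    simp
  · rw [suffixW_getElem _ _ _ (by rw [suffixW_length] at h1; omega : k < m + 1)]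
    rw [cons_getElem_pos _ _ k (by rw [suffixW_length]; rw [suffixW_length] at h1; omega)
      (by omega)]
    rw [suffixW_getElem _ _ _ (by rw [suffixW_length] at h1; omega : k - 1 < m)]
    congr 1
    rw [suffixW_length] at h1
    omega

/-- truncate a left ray, removing the last j symbols -/
def trunc (l : ℕ → A) (j : ℕ) : ℕ → A := fun n => l (n + j)

lemma trunc_mem_leftRays {X : Set (ℤ → A)} (hX : IsSubshift X) {l : ℕ → A} (j : ℕ)
    (hl : l ∈ LeftRays X) : trunc l j ∈ LeftRays X := by
  obtain ⟨x, hx, rfl⟩ := hl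
  refine ⟨shiftPow (-(j:ℤ)) x, shiftPow_mem hX _ hx, ?_⟩
  funext n
  show x (-1 - (n:ℤ) + -(j:ℤ)) = leftRay x (n + j)
  rw [leftRay]
  congr 1; push_cast; ring

lemma rayApp_trunc (l : ℕ → A) (j : ℕ) : rayApp (trunc l j) (suffixW l j) = l := by
  funext n
  by_cases h : n < j
  · rw [rayApp_lt (by rw [suffixW_length]; omega)]
    rw [getElem_idx_congr _ (by rw [suffixW_length] : (suffixW l j).length - 1 - n = j - 1 - n)]
    rw [suffixW_getElem l j (j - 1 - n) (by omega)]
    congr 1; omega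
  · rw [rayApp_ge (by rw [suffixW_length]; omega)]
    rw [trunc, suffixW_length]
    congr 1; omega

lemma trunc_rayApp (l : ℕ → A) (s : List A) {k : ℕ} (hk : k ≤ s.length) :
    trunc (rayApp l s) (s.length - k) = rayApp l (s.take k) := by
  funext n
  have hlt : (s.take k).length = k := by simp; omega
  show rayApp l s (n + (s.length - k)) = _
  by_cases h : n < k
  · rw [rayApp_lt (by omega), rayApp_lt (by omega)]
    rw [getElem_idx_congr _ (by omega : s.length - 1 - (n + (s.length - k)) = k - 1 - n)]
    rw [getElem_idx_congr _ (by rw [hlt] : (s.take k).length - 1 - n = k - 1 - n)]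
    rw [List.getElem_take]
  · rw [rayApp_ge (by omega), rayApp_ge (by omega)]
    congr 1; omega

lemma trunc_rayApp_full (l : ℕ → A) (s : List A) : trunc (rayApp l s) s.length = l := by
  funext n
  show rayApp l s (n + s.length) = l n
  rw [rayApp_ge (by omega)]
  congr 1; omega

lemma base_mem_leftRays {X : Set (ℤ → A)} (hX : IsSubshift X) {l : ℕ → A} {s : List A}
    (h : rayApp l s ∈ LeftRays X) : l ∈ LeftRays X := by
  rw [← trunc_rayApp_full l s]
  exact trunc_mem_leftRays hX _ h

lemma suffixW_rayApp (l : ℕ → A) (s : List A) : suffixW (rayApp l s) s.length = s := by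
  apply List.ext_getElem (by rw [suffixW_length])
  intro k h1 h2
  rw [suffixW_getElem _ _ _ (by omega)]
  rw [rayApp_lt (by omega)]
  rw [getElem_idx_congr _ (by omega : s.length - 1 - (s.length - 1 - k) = k)]

end Aux3
section Aux4

variable {A : Type*}

lemma cfgWord_getElem (x : ℤ → A) (i : ℤ) (k t : ℕ) (h : t < k) :
    (cfgWord x i k)[t]'(by rw [cfgWord_length]; omega) = x (i + t) := by
  simp [cfgWord]

lemma lang_cons {X : Set (ℤ → A)} {a : A} {z : List A} (h : (a :: z) ∈ lang X) :
    z ∈ lang X := by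
  obtain ⟨x, hx, i, hw⟩ := h
  refine ⟨x, hx, i + 1, ?_⟩
  apply List.ext_getElem (by rw [cfgWord_length])
  intro k h1 h2
  rw [cfgWord_length] at h1
  rw [cfgWord_getElem _ _ _ _ h1]
  have hlen : (a :: z).length = z.length + 1 := by simp
  have h3 : (cfgWord x i (a :: z).length)[k+1]'(by rw [cfgWord_length, hlen]; omega)
      = (a :: z)[k+1]'(by rw [hlen]; omega) := by
    exact List.getElem_of_eq hw _
  rw [getElem_idx_congr (cfgWord x i (a :: z).length) (rfl)] at h3
  rw [cfgWord_getElem _ _ _ _ (by rw [hlen]; omega)] at h3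
  simp only [List.getElem_cons_succ] at h3
  rw [← h3]
  congr 1
  push_cast
  ring

/-- word formed by the first n symbols of a right ray -/
def prefixW (r : ℕ → A) (n : ℕ) : List A := List.ofFn (fun k : Fin n => r k)

lemma prefixW_length (r : ℕ → A) (n : ℕ) : (prefixW r n).length = n := by simp [prefixW]

lemma prefixW_getElem (r : ℕ → A) (n k : ℕ) (h : k < n) :
    (prefixW r n)[k]'(by simp [prefixW]; omega) = r k := by
  simp [prefixW]

lemma suffix_mem_lang {X : Set (ℤ → A)} {l : ℕ → A} (hl : l ∈ LeftRays X) (m : ℕ) :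
    suffixW l m ∈ lang X := by
  obtain ⟨x, hx, rfl⟩ := hl
  have he : suffixW (leftRay x) m = cfgWord x (-(m:ℤ)) m := by
    apply List.ext_getElem (by rw [suffixW_length, cfgWord_length])
    intro k h1 h2
    rw [suffixW_length] at h1
    rw [suffixW_getElem _ _ _ h1, cfgWord_getElem _ _ _ _ h1]
    rw [leftRay]
    congr 1
    omega
  rw [he]
  exact word_mem_lang hx _ _

lemma glue_word (l r : ℕ → A) (m n : ℕ) :
    cfgWord (glue l r) (-(m:ℤ)) (m + n) = suffixW l m ++ prefixW r n := by
  apply List.ext_getElem (by rw [cfgWord_length]; simp [suffixW_length, prefixW_length])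
  intro k h1 h2
  rw [cfgWord_length] at h1
  rw [cfgWord_getElem _ _ _ _ h1]
  by_cases h : k < m
  · rw [List.getElem_append_left (by rw [suffixW_length]; omega)]
    rw [suffixW_getElem _ _ _ h]
    rw [glue, if_neg (by omega)]
    congr 1
    omega
  · rw [List.getElem_append_right (by rw [suffixW_length]; omega)]
    rw [getElem_idx_congr _ (by rw [suffixW_length] : k - (suffixW l m).length = k - m)]
    rw [prefixW_getElem _ _ _ (by omega)]
    rw [glue, if_pos (by omega)]
    congr 1
    omega

lemma foll_subset_words {X : Set (ℤ → A)} {l r : ℕ → A} (h : r ∈ foll X l) (m n : ℕ) :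
    suffixW l m ++ prefixW r n ∈ lang X := by
  rw [← glue_word]
  exact word_mem_lang h _ _

lemma mem_foll_of_words {X : Set (ℤ → A)} (hX : IsSubshift X) {l r : ℕ → A}
    (h : ∀ n : ℕ, suffixW l n ++ prefixW r (n+1) ∈ lang X) : r ∈ foll X l := by
  apply mem_of_words hX
  intro n
  have he : 2*n+1 = n + (n+1) := by omega
  rw [he, glue_word]
  exact h n

lemma foll_subset_follW {X : Set (ℤ → A)} (hX : IsSubshift X) {ρ : ℕ → A} {w : List A}
    (hsuf : raySuffix ρ w) : foll X ρ ⊆ follW X w := by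
  intro r hr
  refine ⟨shiftPow (-(w.length:ℤ)) (glue ρ r), shiftPow_mem hX _ hr, ?_⟩
  funext n
  show (glue ρ r) ((n:ℤ) + -(w.length:ℤ)) = wordThen w r n
  rw [wordThen]
  by_cases h : n < w.length
  · rw [dif_pos h]
    rw [glue, if_neg (by omega)]
    have h6 : ρ (w.length - 1 - n) = w.get ⟨n, h⟩ := hsuf ⟨n, h⟩
    rw [← h6]
    congr 1
    omega
  · rw [dif_neg h]
    rw [glue, if_pos (by omega)]
    congr 1
    omega

lemma foll_mono_rayApp {X : Set (ℤ → A)} (hX : IsSubshift X) {l₁ l₂ : ℕ → A}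
    (h : foll X l₁ ⊆ foll X l₂) (s : List A) :
    foll X (rayApp l₁ s) ⊆ foll X (rayApp l₂ s) := by
  induction s generalizing l₁ l₂ with
  | nil => rw [rayApp_nil, rayApp_nil]; exact h
  | cons a s ih =>
    rw [rayApp_cons, rayApp_cons]
    apply ih
    rw [foll_extendRay hX, foll_extendRay hX]
    intro r hr
    exact h hr

end Aux4
section Aux5

variable {A : Type*}

/-- existence of a path in the Fischer graph with the given label word -/
def FSteps (X : Set (ℤ → A)) (w : List A) : List A → Set (ℕ → A) → Set (ℕ → A) → Prop
  | [], q, q' => FVertex X w q ∧ q = q'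
  | a :: s, q, q' => ∃ v, FVertex X w q ∧ KEdge X q a v ∧ FSteps X w s v q'

lemma FSteps_nil_iff {X : Set (ℤ → A)} {w : List A} {q q' : Set (ℕ → A)} :
    FSteps X w [] q q' ↔ FVertex X w q ∧ q = q' := Iff.rfl

lemma FSteps_cons_iff {X : Set (ℤ → A)} {w : List A} {a : A} {s : List A}
    {q q' : Set (ℕ → A)} :
    FSteps X w (a :: s) q q' ↔ ∃ v, FVertex X w q ∧ KEdge X q a v ∧ FSteps X w s v q' :=
  Iff.rfl

lemma FSteps_start {X : Set (ℤ → A)} {w : List A} {s : List A} {q q' : Set (ℕ → A)}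
    (h : FSteps X w s q q') : FVertex X w q := by
  cases s with
  | nil => exact h.1
  | cons a s => obtain ⟨v, hv, _, _⟩ := h; exact hv

lemma FSteps_end {X : Set (ℤ → A)} {w : List A} {s : List A} {q q' : Set (ℕ → A)}
    (h : FSteps X w s q q') : FVertex X w q' := by
  induction s generalizing q with
  | nil => rw [← h.2]; exact h.1
  | cons a s ih => obtain ⟨v, _, _, hs⟩ := h; exact ih hs

lemma FSteps_append {X : Set (ℤ → A)} {w : List A} {s t : List A} {q v q' : Set (ℕ → A)}
    (h1 : FSteps X w s q v) (h2 : FSteps X w t v q') : FSteps X w (s ++ t) q q' := by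
  induction s generalizing q with
  | nil => rw [List.nil_append, h1.2]; exact h2
  | cons a s ih =>
    obtain ⟨u, hq, he, hs⟩ := h1
    exact ⟨u, hq, he, ih hs⟩

lemma FSteps_split {X : Set (ℤ → A)} {w : List A} {s t : List A} {q q' : Set (ℕ → A)}
    (h : FSteps X w (s ++ t) q q') : ∃ v, FSteps X w s q v ∧ FSteps X w t v q' := by
  induction s generalizing q with
  | nil => exact ⟨q, ⟨FSteps_start h, rfl⟩, h⟩
  | cons a s ih =>
    obtain ⟨u, hq, he, hs⟩ := h
    obtain ⟨v, hv1, hv2⟩ := ih hs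
    exact ⟨v, ⟨u, hq, he, hv1⟩, hv2⟩

lemma FSteps_ray {X : Set (ℤ → A)} (hX : IsSubshift X) {w : List A} {s : List A}
    {q q' : Set (ℕ → A)} (h : FSteps X w s q q') :
    ∀ l ∈ LeftRays X, foll X l = q → rayApp l s ∈ LeftRays X ∧ foll X (rayApp l s) = q' := by
  induction s generalizing q with
  | nil =>
    intro l hl hfl
    rw [rayApp_nil]
    exact ⟨hl, hfl.trans h.2⟩
  | cons a s ih =>
    intro l hl hfl
    obtain ⟨v, _, he, hs⟩ := h
    obtain ⟨h1, h2⟩ := KEdge_transfer hX he hl hfl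
    rw [rayApp_cons]
    exact ih hs (extendRay l a) h1 h2

lemma FSteps_lang {X : Set (ℤ → A)} (hX : IsSubshift X) {w : List A} {s : List A}
    {q q' : Set (ℕ → A)} (h : FSteps X w s q q') : s ∈ lang X := by
  obtain ⟨l, hl, hfl⟩ := (FSteps_start h).1
  obtain ⟨h1, _⟩ := FSteps_ray hX h l hl hfl.symm
  have := suffix_mem_lang h1 s.length
  rwa [suffixW_rayApp] at this

lemma KReach_rayApp {X : Set (ℤ → A)} (hX : IsSubshift X) {l : ℕ → A} {s : List A}
    (hl : l ∈ LeftRays X) (hra : rayApp l s ∈ LeftRays X) :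
    KReach X (foll X l) (foll X (rayApp l s)) := by
  induction s generalizing l with
  | nil => rw [rayApp_nil]; exact Relation.ReflTransGen.refl
  | cons a s ih =>
    rw [rayApp_cons] at hra ⊢
    have hext : extendRay l a ∈ LeftRays X := base_mem_leftRays hX hra
    exact Relation.ReflTransGen.head ⟨a, l, hl, hext, rfl, rfl⟩ (ih hext hra)

lemma FSteps_of_ray {X : Set (ℤ → A)} (hX : IsSubshift X) {w : List A} {l : ℕ → A}
    {s : List A} (hl : l ∈ LeftRays X) (hra : rayApp l s ∈ LeftRays X)
    (hFV : ∀ k, k ≤ s.length → FVertex X w (foll X (rayApp l (s.take k)))) :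
    FSteps X w s (foll X l) (foll X (rayApp l s)) := by
  induction s generalizing l with
  | nil =>
    have h0 := hFV 0 (by simp)
    rw [List.take_nil, rayApp_nil] at h0
    rw [rayApp_nil]
    exact ⟨h0, rfl⟩
  | cons a s ih =>
    have hext : extendRay l a ∈ LeftRays X := by
      apply base_mem_leftRays hX (s := s)
      rw [← rayApp_cons]
      exact hra
    have h0 := hFV 0 (by simp)
    rw [List.take_zero, rayApp_nil] at h0
    refine ⟨foll X (extendRay l a), h0, ⟨l, hl, hext, rfl, rfl⟩, ?_⟩
    rw [rayApp_cons]
    apply ih hext (by rw [← rayApp_cons]; exact hra)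
    intro k hk
    have := hFV (k+1) (by simp; omega)
    rw [List.take_succ_cons, rayApp_cons] at this
    exact this

end Aux5
section Aux6

variable {A : Type*}

lemma deep_occurrence {X : Set (ℤ → A)} {w : List A} {l : ℕ → A}
    (htrans : TransitiveShift X) (hwlang : w ∈ lang X) (hlX : l ∈ LeftRays X)
    (hlangL : langL l = lang X) (N : ℕ) :
    ∃ j, N ≤ j ∧ ∀ k : Fin w.length, l (j + (w.length - 1 - (k:ℕ))) = w.get k := by
  have hs : suffixW l N ∈ lang X := suffix_mem_lang hlX N
  obtain ⟨t, ht⟩ := htrans w hwlang (suffixW l N) hs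
  have hW : (w ++ t ++ suffixW l N) ∈ langL l := by rw [hlangL]; exact ht
  obtain ⟨j₂, hj₂⟩ := hW
  have hlen : (w ++ t ++ suffixW l N).length = w.length + t.length + N := by
    rw [List.length_append, List.length_append, suffixW_length]
  refine ⟨j₂ + t.length + N, by omega, ?_⟩
  intro k
  have hk' : (k : ℕ) < (w ++ t ++ suffixW l N).length := by rw [hlen]; have := k.isLt; omega
  have h7 : l (j₂ + ((w ++ t ++ suffixW l N).length - 1 - (k : ℕ)))
      = (w ++ t ++ suffixW l N).get ⟨(k : ℕ), hk'⟩ := hj₂ ⟨(k : ℕ), hk'⟩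
  have h8 : (w ++ t ++ suffixW l N).get ⟨(k : ℕ), hk'⟩ = w.get k := by
    simp only [List.get_eq_getElem]
    rw [List.getElem_append_left (by simp; have := k.isLt; omega)]
    rw [List.getElem_append_left (by have := k.isLt; omega)]
  rw [h8] at h7
  rw [← h7]
  congr 1
  rw [hlen]
  have := k.isLt
  omega

lemma density {X : Set (ℤ → A)} (hX : IsSubshift X) {w : List A}
    (htrans : TransitiveShift X) (hw : HalfSyncWord X w) :
    ∀ u ∈ lang X, ∃ q q', FSteps X w u q q' := by
  obtain ⟨hwlang, l, hlX, hsuf, hlangL, hfoll⟩ := hw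
  intro u hu
  have hu' : u ∈ langL l := by rw [hlangL]; exact hu
  obtain ⟨j', hj'⟩ := hu'
  obtain ⟨j, hjge, hjw⟩ := deep_occurrence htrans hwlang hlX hlangL (max (j' + u.length) w.length)
  have hju : j' + u.length ≤ j := le_trans (le_max_left _ _) hjge
  have hjwl : w.length ≤ j := le_trans (le_max_right _ _) hjge
  have hjw' : raySuffix (trunc l j) w := by
    intro k
    show l ((w.length - 1 - (k:ℕ)) + j) = w.get k
    rw [← hjw k]
    congr 1
    omega
  have hc1 : rayApp (trunc l j) (suffixW l j) = l := rayApp_trunc l j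
  have htruncL : trunc l j ∈ LeftRays X := trunc_mem_leftRays hX j hlX
  have hsub1 : foll X (trunc l j) ⊆ foll X l := by
    rw [hfoll]
    exact foll_subset_follW hX hjw'
  have hsub2 : foll X l ⊆ foll X (rayApp l (suffixW l j)) := by
    conv_lhs => rw [← hc1]
    exact foll_mono_rayApp hX hsub1 (suffixW l j)
  have hagree : ∀ n, n < j → rayApp l (suffixW l j) n = l n := by
    intro n hn
    rw [rayApp_lt (by rw [suffixW_length]; omega)]
    rw [getElem_idx_congr _ (by rw [suffixW_length] : (suffixW l j).length - 1 - n = j - 1 - n)]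
    rw [suffixW_getElem _ _ _ (by omega)]
    congr 1
    omega
  have hrac_suffix : raySuffix (rayApp l (suffixW l j)) w := by
    intro k
    rw [hagree _ (by have := k.isLt; omega)]
    exact hsuf k
  have hsub3 : foll X (rayApp l (suffixW l j)) ⊆ foll X l := by
    rw [hfoll]
    exact foll_subset_follW hX hrac_suffix
  have hfolleq : foll X (rayApp l (suffixW l j)) = foll X l := subset_antisymm hsub3 hsub2
  have hracL : rayApp l (suffixW l j) ∈ LeftRays X := by
    rw [mem_leftRays_iff]
    obtain ⟨r, hr⟩ := mem_leftRays_iff.mp hlX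
    have hrr : r ∈ foll X (rayApp l (suffixW l j)) := by rw [hfolleq]; exact hr
    exact ⟨r, hrr⟩
  have htake : ∀ k, k ≤ j → rayApp l ((suffixW l j).take k) ∈ LeftRays X := by
    intro k hk
    rw [← trunc_rayApp l (suffixW l j) (by rw [suffixW_length]; omega)]
    exact trunc_mem_leftRays hX _ hracL
  have hFV : ∀ k, k ≤ j → FVertex X w (foll X (rayApp l ((suffixW l j).take k))) := by
    intro k hk
    refine ⟨⟨rayApp l ((suffixW l j).take k), htake k hk, rfl⟩, ?_, ?_⟩
    · rw [← hfoll]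
      exact KReach_rayApp hX hlX (htake k hk)
    · have hdrop : rayApp (rayApp l ((suffixW l j).take k)) ((suffixW l j).drop k) = rayApp l (suffixW l j) := by
        rw [← rayApp_append, List.take_append_drop]
      have hre := KReach_rayApp hX (htake k hk) (by rw [hdrop]; exact hracL)
      rw [hdrop, hfolleq, hfoll] at hre
      exact hre
  have hseg : ((suffixW l j).drop (j - j' - u.length)).take u.length = u := by
    apply List.ext_getElem (by simp [suffixW_length]; omega)
    intro k h1 h2
    rw [List.getElem_take, List.getElem_drop]
    rw [suffixW_getElem _ _ _ (by omega)]
    have h9 : l (j' + (u.length - 1 - k)) = u.get ⟨k, h2⟩ := hj' ⟨k, h2⟩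
    rw [← List.get_eq_getElem (l := u) (i := ⟨k, h2⟩), ← h9]
    congr 1
    omega
  set a := j - j' - u.length with ha
  have htk : ∀ k, k ≤ u.length → (suffixW l j).take a ++ u.take k = (suffixW l j).take (a + k) := by
    intro k hk
    rw [List.take_add]
    congr 1
    rw [← hseg, List.take_take]
    congr 1
    omega
  have h10 : (suffixW l j).take a ++ u = (suffixW l j).take (a + u.length) := by
    have h11 := htk u.length (le_refl _)
    rwa [List.take_length] at h11
  have hra : rayApp (rayApp l ((suffixW l j).take a)) u ∈ LeftRays X := by
    rw [← rayApp_append, h10]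
    exact htake _ (by omega)
  have hfv : ∀ k, k ≤ u.length →
      FVertex X w (foll X (rayApp (rayApp l ((suffixW l j).take a)) (u.take k))) := by
    intro k hk
    rw [← rayApp_append, htk k hk]
    exact hFV (a + k) (by omega)
  exact ⟨_, _, FSteps_of_ray hX (htake a (by omega)) hra hfv⟩

end Aux6
section Aux7

variable {A : Type*}

/-- follower set of a finite word, in terms of the language -/
def ExtL (X : Set (ℤ → A)) (u : List A) : Set (List A) := {v | u ++ v ∈ lang X}

/-- the collection of candidate word-follower sets built from Fischer vertices -/
def PhiC (X : Set (ℤ → A)) (w : List A) : Set (Set (List A)) :=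
  (fun S => insert ([] : List A) {v | ∃ q ∈ S, ∃ q', FSteps X w v q q'}) ''
    {S | S ⊆ {q | FVertex X w q}}

lemma ExtL_eq {X : Set (ℤ → A)} (hX : IsSubshift X) {w : List A}
    (htrans : TransitiveShift X) (hw : HalfSyncWord X w) {u : List A} (hu : u ∈ lang X) :
    ExtL X u = insert ([] : List A)
      {v | ∃ q ∈ {q | ∃ q₀, FSteps X w u q₀ q}, ∃ q', FSteps X w v q q'} := by
  ext v
  rw [Set.mem_insert_iff]
  constructor
  · intro hv
    by_cases hv0 : v = []
    · exact Or.inl hv0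
    · obtain ⟨q₀, q₂, hsteps⟩ := density hX htrans hw (u ++ v) hv
      obtain ⟨q, h1, h2⟩ := FSteps_split hsteps
      exact Or.inr ⟨q, ⟨q₀, h1⟩, q₂, h2⟩
  · rintro (rfl | ⟨q, ⟨q₀, h1⟩, q', h2⟩)
    · show u ++ [] ∈ lang X
      rw [List.append_nil]
      exact hu
    · exact FSteps_lang hX (FSteps_append h1 h2)

lemma ExtL_mem_PhiC {X : Set (ℤ → A)} (hX : IsSubshift X) {w : List A}
    (htrans : TransitiveShift X) (hw : HalfSyncWord X w) {u : List A} (hu : u ∈ lang X) :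
    ExtL X u ∈ PhiC X w := by
  refine ⟨{q | ∃ q₀, FSteps X w u q₀ q}, ?_, (ExtL_eq hX htrans hw hu).symm⟩
  rintro q ⟨q₀, h⟩
  exact FSteps_end h

lemma PhiC_finite {X : Set (ℤ → A)} {w : List A}
    (hfin : {v : Set (ℕ → A) | FVertex X w v}.Finite) : (PhiC X w).Finite :=
  Set.Finite.image _ (Set.Finite.finite_subsets hfin)

lemma ExtL_antitone {X : Set (ℤ → A)} (l : ℕ → A) (m : ℕ) :
    ExtL X (suffixW l (m+1)) ⊆ ExtL X (suffixW l m) := by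
  intro v hv
  have hv' : suffixW l (m+1) ++ v ∈ lang X := hv
  rw [suffixW_succ, List.cons_append] at hv'
  exact lang_cons hv'

lemma foll_eq_inter {X : Set (ℤ → A)} (hX : IsSubshift X) (l : ℕ → A) :
    foll X l = {r | ∀ n, prefixW r n ∈ ⋂ m, ExtL X (suffixW l m)} := by
  ext r
  constructor
  · intro hr n
    rw [Set.mem_iInter]
    intro m
    exact foll_subset_words hr m n
  · intro hr
    apply mem_foll_of_words hX
    intro n
    exact Set.mem_iInter.mp (hr (n+1)) n

end Aux7
theorem stmt6 [Finite A] (X : Set (ℤ → A)) (hX : IsSubshift X)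
    (hhs : HalfSynchronized X) (w : List A) (hw : HalfSyncWord X w)
    (hfin : {v : Set (ℕ → A) | FVertex X w v}.Finite) : Sofic X := by
  obtain ⟨htrans, -⟩ := hhs
  show {v : Set (ℕ → A) | KVertex X v}.Finite
  apply Set.Finite.subset
    (Set.Finite.image (fun E : Set (List A) => {r : ℕ → A | ∀ n, prefixW r n ∈ E})
      (PhiC_finite hfin))
  rintro v ⟨l, hl, rfl⟩
  refine ⟨⋂ m, ExtL X (suffixW l m), ?_, (foll_eq_inter hX l).symm⟩
  -- the decreasing chain of word-follower sets stabilizes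
  set g : ℕ → Set (List A) := fun m => ExtL X (suffixW l m) with hg
  have hmem : ∀ m, g m ∈ PhiC X w := fun m =>
    ExtL_mem_PhiC hX htrans hw (suffix_mem_lang hl m)
  have hfinr : (Set.range g).Finite :=
    Set.Finite.subset (PhiC_finite hfin) (by rintro E ⟨m, rfl⟩; exact hmem m)
  obtain ⟨E0, ⟨M, hM⟩, hmin⟩ :=
    Set.Finite.exists_minimalFor id (Set.range g) hfinr ⟨g 0, 0, rfl⟩
  have hanti : Antitone g := antitone_nat_of_succ_le (fun m => ExtL_antitone l m)
  have hEq : ∀ m, M ≤ m → g m = E0 := by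
    intro m hm
    have := @hmin (g m) ⟨m, rfl⟩ (by rw [← hM] at *; exact hanti hm)
    exact le_antisymm (by rw [← hM]; exact hanti hm) this
  have hinter : (⋂ m, g m) = g M := by
    apply subset_antisymm (Set.iInter_subset g M)
    intro x hx
    rw [Set.mem_iInter]
    intro m
    rcases le_or_gt m M with h | h
    · exact hanti h hx
    · rw [hEq m (le_of_lt h), ← hEq M (le_refl M)]; exact hx
  rw [show (⋂ m, ExtL X (suffixW l m)) = ⋂ m, g m from rfl, hinter]
  exact hmem M

end Paper
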